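/- Let γ ∈ (0,1], σ ≥ 0 and z ∈ [0,1]. Then there is a constant C > 0 (depending only on γ and σ) such that for all y, y' ∈ ℝ⁶: |exp(z·⟨y⟩^γ)·⟨y⟩^σ − exp(z·⟨y'⟩^γ)·⟨y'⟩^σ| ≤ C · (⟨y−y'⟩ / (⟨y⟩^{1−γ} + ⟨y'⟩^{1−γ})) · (exp(z·⟨y⟩^γ)·⟨y⟩^σ + exp(z·⟨y'⟩^γ)·⟨y'⟩^σ). -/

import Mathlib

/-- The Japanese bracket `⟨y⟩ = sqrt(1 + |y|²)` of `y ∈ ℝ⁶`. -/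
noncomputable def jb6 (y : Fin 6 → ℝ) : ℝ := Real.sqrt (1 + ∑ i, (y i) ^ 2)

/-- The Gevrey multiplier `A(z)_y = exp(z ⟨y⟩^γ) ⟨y⟩^σ` on `ℝ⁶`. -/
noncomputable def gevreyA6 (γ σ z : ℝ) (y : Fin 6 → ℝ) : ℝ :=
  Real.exp (z * jb6 y ^ γ) * jb6 y ^ σ

lemma one_le_jb6 (y : Fin 6 → ℝ) : 1 ≤ jb6 y := by
  unfold jb6
  have h : (0:ℝ) ≤ ∑ i, (y i)^2 := by positivity
  exact Real.le_sqrt_of_sq_le (by nlinarith)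

/-- Euclidean norm on `ℝ⁶`. -/
noncomputable def en6 (y : Fin 6 → ℝ) : ℝ := Real.sqrt (∑ i, (y i) ^ 2)

lemma en6_eq_norm (y : Fin 6 → ℝ) :
    en6 y = ‖(WithLp.equiv 2 (Fin 6 → ℝ)).symm y‖ := by
  rw [EuclideanSpace.norm_eq]
  unfold en6
  congr 1
  refine Finset.sum_congr rfl fun i _ => ?_
  rw [WithLp.equiv_symm_apply, WithLp.ofLp_toLp]
  rw [Real.norm_eq_abs, sq_abs]

lemma en6_nonneg (y : Fin 6 → ℝ) : 0 ≤ en6 y := Real.sqrt_nonneg _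

lemma en6_triangle (u v : Fin 6 → ℝ) : en6 (u + v) ≤ en6 u + en6 v := by
  rw [en6_eq_norm, en6_eq_norm, en6_eq_norm]
  rw [show (WithLp.equiv 2 (Fin 6 → ℝ)).symm (u + v)
      = (WithLp.equiv 2 (Fin 6 → ℝ)).symm u + (WithLp.equiv 2 (Fin 6 → ℝ)).symm v from
    WithLp.toLp_add 2 u v]
  exact norm_add_le _ _

lemma jb6_eq (y : Fin 6 → ℝ) : jb6 y = Real.sqrt (1 + en6 y ^ 2) := by
  unfold jb6 en6
  rw [Real.sq_sqrt (by positivity : (0:ℝ) ≤ ∑ i, (y i)^2)]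

lemma en6_le_jb6 (y : Fin 6 → ℝ) : en6 y ≤ jb6 y := by
  rw [jb6_eq]
  exact Real.le_sqrt_of_sq_le (by nlinarith)

lemma sqrt_one_add_sq_sub (r s : ℝ) (hs : 0 ≤ s) (hsr : s ≤ r) :
    Real.sqrt (1 + r ^ 2) - Real.sqrt (1 + s ^ 2) ≤ r - s := by
  set A := Real.sqrt (1 + r ^ 2) with hA
  set B := Real.sqrt (1 + s ^ 2) with hB
  have hA2 : A ^ 2 = 1 + r ^ 2 := Real.sq_sqrt (by positivity)
  have hB2 : B ^ 2 = 1 + s ^ 2 := Real.sq_sqrt (by positivity)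
  have hAr : r ≤ A := Real.le_sqrt_of_sq_le (by nlinarith)
  have hBs : s ≤ B := Real.le_sqrt_of_sq_le (by nlinarith)
  have hApos : (1:ℝ) ≤ A := Real.le_sqrt_of_sq_le (by nlinarith)
  have hBpos : (1:ℝ) ≤ B := Real.le_sqrt_of_sq_le (by nlinarith)
  nlinarith [sq_nonneg (A - B), sq_nonneg (A + B)]

/-- Lipschitz-type bound: `|⟨y⟩ - ⟨y'⟩| ≤ ⟨y - y'⟩`. -/
lemma jb6_sub_le (y y' : Fin 6 → ℝ) : jb6 y - jb6 y' ≤ jb6 (y - y') := by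
  have htri : en6 y ≤ en6 y' + en6 (y - y') := by
    have := en6_triangle y' (y - y')
    simpa using this
  rcases le_total (en6 y) (en6 y') with h | h
  · have h1 : jb6 y ≤ jb6 y' := by
      rw [jb6_eq, jb6_eq]
      apply Real.sqrt_le_sqrt
      nlinarith [en6_nonneg y, en6_nonneg y']
    have := one_le_jb6 (y - y')
    linarith
  · have h2 : jb6 y - jb6 y' ≤ en6 y - en6 y' := by
      rw [jb6_eq, jb6_eq]
      exact sqrt_one_add_sq_sub (en6 y) (en6 y') (en6_nonneg y') h
    have h3 : en6 y - en6 y' ≤ en6 (y - y') := by linarith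
    have h4 : en6 (y - y') ≤ jb6 (y - y') := en6_le_jb6 _
    linarith

lemma gevrey_mono (γ σ z a b : ℝ) (hγ : 0 ≤ γ) (hσ : 0 ≤ σ) (hz0 : 0 ≤ z)
    (ha : 0 ≤ a) (hab : a ≤ b) :
    Real.exp (z * a ^ γ) * a ^ σ ≤ Real.exp (z * b ^ γ) * b ^ σ := by
  have h1 : a ^ γ ≤ b ^ γ := Real.rpow_le_rpow ha hab hγ
  have h2 : a ^ σ ≤ b ^ σ := Real.rpow_le_rpow ha hab hσ
  have h3 : Real.exp (z * a ^ γ) ≤ Real.exp (z * b ^ γ) :=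
    Real.exp_le_exp.mpr (by nlinarith)
  exact mul_le_mul h3 h2 (Real.rpow_nonneg ha σ) (Real.exp_pos _).le

/-- MVT for rpow. -/
lemma rpow_mvt (p a b : ℝ) (ha : 0 < a) (hab : a ≤ b) :
    ∃ c, a ≤ c ∧ c ≤ b ∧ b ^ p - a ^ p = p * c ^ (p - 1) * (b - a) := by
  rcases eq_or_lt_of_le hab with rfl | hab'
  · exact ⟨a, le_refl _, le_refl _, by ring⟩
  · have hcont : ContinuousOn (fun x : ℝ => x ^ p) (Set.Icc a b) := by
      apply ContinuousOn.rpow_const continuousOn_id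
      intro x hx
      exact Or.inl (ne_of_gt (lt_of_lt_of_le ha hx.1))
    have hderiv : ∀ x ∈ Set.Ioo a b,
        HasDerivAt (fun x : ℝ => x ^ p) (p * x ^ (p - 1)) x := by
      intro x hx
      exact Real.hasDerivAt_rpow_const (Or.inl (ne_of_gt (lt_trans ha hx.1)))
    obtain ⟨c, hc, hceq⟩ := exists_hasDerivAt_eq_slope (fun x : ℝ => x ^ p)
      (fun x => p * x ^ (p - 1)) hab' hcont hderiv
    refine ⟨c, hc.1.le, hc.2.le, ?_⟩
    rw [eq_div_iff (ne_of_gt (by linarith : (0:ℝ) < b - a))] at hceq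
    linarith [hceq]

set_option maxHeartbeats 1000000 in
/-- The key 1-dimensional estimate. -/
lemma key (γ σ z a b d : ℝ) (hγ0 : 0 < γ) (hγ1 : γ ≤ 1) (hσ : 0 ≤ σ)
    (hz0 : 0 ≤ z) (hz1 : z ≤ 1) (ha : 1 ≤ a) (hab : a ≤ b)
    (hd : b - a ≤ d) (hd1 : 1 ≤ d) :
    Real.exp (z * b ^ γ) * b ^ σ - Real.exp (z * a ^ γ) * a ^ σ
      ≤ 4 * (1 + γ + σ) * (d / (a ^ (1 - γ) + b ^ (1 - γ))) *
          (Real.exp (z * a ^ γ) * a ^ σ + Real.exp (z * b ^ γ) * b ^ σ) := by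
  have ha0 : (0:ℝ) < a := by linarith
  have hb1 : (1:ℝ) ≤ b := le_trans ha hab
  have hb0 : (0:ℝ) < b := by linarith
  set Fa := Real.exp (z * a ^ γ) * a ^ σ with hFa
  set Fb := Real.exp (z * b ^ γ) * b ^ σ with hFb
  have hFa0 : 0 < Fa := mul_pos (Real.exp_pos _) (Real.rpow_pos_of_pos ha0 _)
  have hFb0 : 0 < Fb := mul_pos (Real.exp_pos _) (Real.rpow_pos_of_pos hb0 _)
  have hFab : Fa ≤ Fb := gevrey_mono γ σ z a b hγ0.le hσ hz0 ha0.le hab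
  set S := a ^ (1 - γ) + b ^ (1 - γ) with hS
  have haS : 0 < a ^ (1 - γ) := Real.rpow_pos_of_pos ha0 _
  have hbS : 0 < b ^ (1 - γ) := Real.rpow_pos_of_pos hb0 _
  have hS0 : 0 < S := by rw [hS]; linarith
  have hdpos : (0:ℝ) < d := by linarith
  have hQ0 : 0 < d / S := div_pos hdpos hS0
  have hγb : a ^ γ ≤ b ^ γ := Real.rpow_le_rpow ha0.le hab hγ0.le
  have hexpab : Real.exp (z * a ^ γ) ≤ Real.exp (z * b ^ γ) :=
    Real.exp_le_exp.mpr (by nlinarith)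
  rcases le_total b (2 * a) with hcase | hcase
  · -- main case: b ≤ 2a, mean value estimates
    obtain ⟨c₁, hc₁a, hc₁b, hc₁⟩ := rpow_mvt γ a b ha0 hab
    obtain ⟨c₂, hc₂a, hc₂b, hc₂⟩ := rpow_mvt σ a b ha0 hab
    have hc₁0 : 0 < c₁ := lt_of_lt_of_le ha0 hc₁a
    have hc₂0 : 0 < c₂ := lt_of_lt_of_le ha0 hc₂a
    have hexp : Real.exp (z * b ^ γ) - Real.exp (z * a ^ γ)
        ≤ (z * b ^ γ - z * a ^ γ) * Real.exp (z * b ^ γ) := by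
      have h := Real.add_one_le_exp (z * a ^ γ - z * b ^ γ)
      have he : Real.exp (z * a ^ γ)
          = Real.exp (z * a ^ γ - z * b ^ γ) * Real.exp (z * b ^ γ) := by
        rw [← Real.exp_add]; ring_nf
      nlinarith [Real.exp_pos (z * b ^ γ)]
    have hcg : c₁ ^ (γ - 1) ≤ a ^ (γ - 1) :=
      Real.rpow_le_rpow_of_nonpos ha0 hc₁a (by linarith)
    have hcg0 : 0 < c₁ ^ (γ - 1) := Real.rpow_pos_of_pos hc₁0 _
    have hag0 : 0 < a ^ (γ - 1) := Real.rpow_pos_of_pos ha0 _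
    have hcs : c₂ ^ (σ - 1) ≤ b ^ σ * a ^ (γ - 1) := by
      have e1 : a ^ (1 - γ) ≤ c₂ ^ (1 - γ) :=
        Real.rpow_le_rpow ha0.le hc₂a (by linarith)
      have e2 : c₂ ^ (σ - 1) * c₂ ^ (1 - γ) = c₂ ^ (σ - γ) := by
        rw [← Real.rpow_add hc₂0]; ring_nf
      have e3 : c₂ ^ (σ - γ) ≤ c₂ ^ σ :=
        Real.rpow_le_rpow_of_exponent_le (le_trans ha hc₂a) (by linarith)
      have e4 : c₂ ^ σ ≤ b ^ σ := Real.rpow_le_rpow hc₂0.le hc₂b hσ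
      have e5 : 0 < c₂ ^ (σ - 1) := Real.rpow_pos_of_pos hc₂0 _
      have e6 : c₂ ^ (σ - 1) * a ^ (1 - γ) ≤ b ^ σ := by
        calc c₂ ^ (σ - 1) * a ^ (1 - γ) ≤ c₂ ^ (σ - 1) * c₂ ^ (1 - γ) := by nlinarith
          _ = c₂ ^ (σ - γ) := e2
          _ ≤ b ^ σ := le_trans e3 e4
      have e7 : a ^ (1 - γ) * a ^ (γ - 1) = 1 := by
        rw [← Real.rpow_add ha0]; norm_num
      calc c₂ ^ (σ - 1) = c₂ ^ (σ - 1) * a ^ (1 - γ) * a ^ (γ - 1) := by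
            rw [mul_assoc, e7, mul_one]
        _ ≤ b ^ σ * a ^ (γ - 1) := mul_le_mul_of_nonneg_right e6 hag0.le
    have hgS : a ^ (γ - 1) ≤ 4 / S := by
      have e1 : b ^ (1 - γ) ≤ 2 ^ (1 - γ) * a ^ (1 - γ) := by
        have h2 := Real.rpow_le_rpow hb0.le hcase (by linarith : (0:ℝ) ≤ 1 - γ)
        rwa [Real.mul_rpow (by norm_num) ha0.le] at h2
      have e2 : (2:ℝ) ^ (1 - γ) ≤ 2 := by
        calc (2:ℝ) ^ (1 - γ) ≤ (2:ℝ) ^ (1:ℝ) :=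
              Real.rpow_le_rpow_of_exponent_le one_le_two (by linarith)
          _ = 2 := Real.rpow_one 2
      have e2' : (0:ℝ) < (2:ℝ) ^ (1 - γ) := Real.rpow_pos_of_pos two_pos _
      have e9 := mul_le_mul_of_nonneg_right e2 haS.le
      have e3 : S ≤ 4 * a ^ (1 - γ) := by rw [hS]; linarith
      have e7 : a ^ (1 - γ) * a ^ (γ - 1) = 1 := by
        rw [← Real.rpow_add ha0]; norm_num
      rw [le_div_iff₀ hS0]
      calc a ^ (γ - 1) * S ≤ a ^ (γ - 1) * (4 * a ^ (1 - γ)) :=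
            mul_le_mul_of_nonneg_left e3 hag0.le
        _ = 4 := by linear_combination 4 * e7
    have split : Fb - Fa = (Real.exp (z * b ^ γ) - Real.exp (z * a ^ γ)) * b ^ σ
        + Real.exp (z * a ^ γ) * (b ^ σ - a ^ σ) := by rw [hFa, hFb]; ring
    have hbσ0 : 0 < b ^ σ := Real.rpow_pos_of_pos hb0 _
    have hexpb : 0 < Real.exp (z * b ^ γ) := Real.exp_pos _
    have hexpa : 0 < Real.exp (z * a ^ γ) := Real.exp_pos _
    have hba : (0:ℝ) ≤ b - a := by linarith
    have T1 : (Real.exp (z * b ^ γ) - Real.exp (z * a ^ γ)) * b ^ σ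
        ≤ γ * a ^ (γ - 1) * (b - a) * Fb := by
      have h0 : z * b ^ γ - z * a ^ γ ≤ b ^ γ - a ^ γ := by nlinarith
      have hγd : (0:ℝ) ≤ b ^ γ - a ^ γ := by linarith
      calc (Real.exp (z * b ^ γ) - Real.exp (z * a ^ γ)) * b ^ σ
          ≤ ((b ^ γ - a ^ γ) * Real.exp (z * b ^ γ)) * b ^ σ :=
            mul_le_mul_of_nonneg_right
              (le_trans hexp (mul_le_mul_of_nonneg_right h0 hexpb.le)) hbσ0.le
        _ = γ * c₁ ^ (γ - 1) * (b - a) * Fb := by rw [hc₁, hFb]; ring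
        _ ≤ γ * a ^ (γ - 1) * (b - a) * Fb := by
            have h9 := mul_le_mul_of_nonneg_right
              (mul_le_mul_of_nonneg_left hcg hγ0.le) (mul_nonneg hba hFb0.le)
            calc γ * c₁ ^ (γ - 1) * (b - a) * Fb
                = γ * c₁ ^ (γ - 1) * ((b - a) * Fb) := by ring
              _ ≤ γ * a ^ (γ - 1) * ((b - a) * Fb) := h9
              _ = γ * a ^ (γ - 1) * (b - a) * Fb := by ring
    have T2 : Real.exp (z * a ^ γ) * (b ^ σ - a ^ σ)
        ≤ σ * a ^ (γ - 1) * (b - a) * Fb := by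
      calc Real.exp (z * a ^ γ) * (b ^ σ - a ^ σ)
          = Real.exp (z * a ^ γ) * (σ * c₂ ^ (σ - 1) * (b - a)) := by rw [hc₂]
        _ ≤ Real.exp (z * b ^ γ) * (σ * (b ^ σ * a ^ (γ - 1)) * (b - a)) := by
            have e5 : 0 ≤ c₂ ^ (σ - 1) := (Real.rpow_pos_of_pos hc₂0 _).le
            have h8 : σ * c₂ ^ (σ - 1) * (b - a) ≤ σ * (b ^ σ * a ^ (γ - 1)) * (b - a) :=
              mul_le_mul_of_nonneg_right (mul_le_mul_of_nonneg_left hcs hσ) hba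
            have h9 : 0 ≤ σ * c₂ ^ (σ - 1) * (b - a) :=
              mul_nonneg (mul_nonneg hσ e5) hba
            exact mul_le_mul hexpab h8 h9 hexpb.le
        _ = σ * a ^ (γ - 1) * (b - a) * Fb := by rw [hFb]; ring
    have step : Fb - Fa ≤ (γ + σ) * (a ^ (γ - 1) * (b - a)) * Fb := by
      rw [split]
      have hr : γ * a ^ (γ - 1) * (b - a) * Fb + σ * a ^ (γ - 1) * (b - a) * Fb
          = (γ + σ) * (a ^ (γ - 1) * (b - a)) * Fb := by ring
      linarith [T1, T2]
    have step2 : a ^ (γ - 1) * (b - a) ≤ 4 * (d / S) := by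
      have h4S : (0:ℝ) < 4 / S := by positivity
      calc a ^ (γ - 1) * (b - a) ≤ (4 / S) * d :=
            mul_le_mul hgS hd hba h4S.le
        _ = 4 * (d / S) := by ring
    calc Fb - Fa ≤ (γ + σ) * (a ^ (γ - 1) * (b - a)) * Fb := step
      _ ≤ (γ + σ) * (4 * (d / S)) * Fb :=
          mul_le_mul_of_nonneg_right
            (mul_le_mul_of_nonneg_left step2 (by linarith : (0:ℝ) ≤ γ + σ)) hFb0.le
      _ ≤ (1 + γ + σ) * (4 * (d / S)) * Fb :=
          mul_le_mul_of_nonneg_right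
            (mul_le_mul_of_nonneg_right (by linarith) (by positivity)) hFb0.le
      _ ≤ (1 + γ + σ) * (4 * (d / S)) * (Fa + Fb) :=
          mul_le_mul_of_nonneg_left (by linarith) (by positivity)
      _ = 4 * (1 + γ + σ) * (d / S) * (Fa + Fb) := by ring
  · -- easy case: 2a ≤ b
    have hb' : b ^ (1 - γ) ≤ b := by
      have h2 := Real.rpow_le_rpow_of_exponent_le hb1 (by linarith : 1 - γ ≤ 1)
      rwa [Real.rpow_one] at h2
    have hab' : a ^ (1 - γ) ≤ b ^ (1 - γ) :=
      Real.rpow_le_rpow ha0.le hab (by linarith)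
    have hS4 : S ≤ 4 * d := by rw [hS]; linarith
    have hQ : 1 ≤ 4 * (d / S) := by
      rw [show 4 * (d / S) = (4 * d) / S by ring, le_div_iff₀ hS0]; linarith
    calc Fb - Fa ≤ 1 * (Fa + Fb) := by linarith
      _ ≤ (1 + γ + σ) * (4 * (d / S)) * (Fa + Fb) := by
          apply mul_le_mul_of_nonneg_right _ (by linarith : (0:ℝ) ≤ Fa + Fb)
          have : (1:ℝ) ≤ (1 + γ + σ) := by linarith
          nlinarith [hQ0]
      _ = 4 * (1 + γ + σ) * (d / S) * (Fa + Fb) := by ring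

theorem gevreyA_difference_estimate (γ σ z : ℝ)
    (hγ0 : 0 < γ) (hγ1 : γ ≤ 1) (hσ : 0 ≤ σ) (hz0 : 0 ≤ z) (hz1 : z ≤ 1) :
    ∃ C > (0 : ℝ), ∀ y y' : Fin 6 → ℝ,
      |gevreyA6 γ σ z y - gevreyA6 γ σ z y'|
        ≤ C * (jb6 (y - y') / (jb6 y ^ (1 - γ) + jb6 y' ^ (1 - γ))) *
            (gevreyA6 γ σ z y + gevreyA6 γ σ z y') := by
  refine ⟨4 * (1 + γ + σ), by positivity, fun y y' => ?_⟩
  have hsymm : jb6 (y' - y) = jb6 (y - y') := by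
    unfold jb6
    congr 2
    refine Finset.sum_congr rfl fun i _ => ?_
    have : (y' - y) i = -((y - y') i) := by
      rw [Pi.sub_apply, Pi.sub_apply]; ring
    rw [this, neg_sq]
  have h1 := one_le_jb6 y
  have h1' := one_le_jb6 y'
  have hd1 := one_le_jb6 (y - y')
  rcases le_total (jb6 y') (jb6 y) with h | h
  · have hmono : gevreyA6 γ σ z y' ≤ gevreyA6 γ σ z y := by
      simpa only [gevreyA6] using
        gevrey_mono γ σ z (jb6 y') (jb6 y) hγ0.le hσ hz0 (by linarith) h
    rw [abs_of_nonneg (by linarith)]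
    have hk := key γ σ z (jb6 y') (jb6 y) (jb6 (y - y')) hγ0 hγ1 hσ hz0 hz1
      h1' h (jb6_sub_le y y') hd1
    simp only [gevreyA6]
    exact le_trans hk (le_of_eq (by ring))
  · have hmono : gevreyA6 γ σ z y ≤ gevreyA6 γ σ z y' := by
      simpa only [gevreyA6] using
        gevrey_mono γ σ z (jb6 y) (jb6 y') hγ0.le hσ hz0 (by linarith) h
    rw [abs_sub_comm, abs_of_nonneg (by linarith)]
    have hd : jb6 y' - jb6 y ≤ jb6 (y - y') := by
      have := jb6_sub_le y' y
      rwa [hsymm] at this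
    have hk := key γ σ z (jb6 y) (jb6 y') (jb6 (y - y')) hγ0 hγ1 hσ hz0 hz1
      h1 h hd hd1
    simp only [gevreyA6]
    exact le_trans hk (le_of_eq (by ring))
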